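/- Let k ≥ 3 and r be positive integers with r < k, let p = (p_1,…,p_k) be a tuple of non-negative integers, let a ∈ {2,3,…,k−1} and D ⊆ [a−2]. Define K_{i,j} and 𝔖_{k,a} as follows: K_{i,i} = ∅ if i∈[a−2]∖D, K_{i,i} = [k] if i∈D∪{a−1}, K_{i,j} = ]i,j] for i∈{a−1,…,k−1}, j∈[k], (i,j) ≠ (a−1,a−1); 𝔖_{k,a} is the set of permutations π of [k] with π(i)=i for all i∈[a−2]. For a surjection f:[k−1]→[r], π∈𝔖_{k,a} and j∈[k−1], set H_{f,π,j} = ∪ { K_{i,π(i)} : i∈[k−1]∖{j}, f(i)=f(j) }. Then Σ sgn(π) = 0, where the sum is over all triples (S,f,π) with S∈S_{p,r}, f a surjection from [k−1] onto [r], and π∈𝔖_{k,a}, satisfying K_{i,π(i)} ⊆ S_{f(i)} for every i∈[k−1] and additionally f(a−1) ≠ f(a), a ∉ H_{f,π,a−1}, and a ∉ H_{f,π,a}. -/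
import Mathlib


open Finset

/-- The cyclic interval `]i,j]` of `[k] = {1,…,k}`, realized inside `ZMod k`
(the element `k` of `[k]` is represented by `0 : ZMod k`). -/
def cyc (k : ℕ) [NeZero k] (i j : ZMod k) : Finset (ZMod k) :=
  Finset.univ.filter fun x => 1 ≤ (x - i).val ∧ (x - i).val ≤ (j - i).val

/-- Membership in `𝒮_{p,r}` : each `j ∈ [k]` belongs to exactly `p j` of the sets `S_1,…,S_r`. -/
def SprMem (k r : ℕ) [NeZero k] (p : ZMod k → ℕ) (S : Fin r → Finset (ZMod k)) : Prop :=
  ∀ j : ZMod k, Nat.card {i : Fin r // j ∈ S i} = p j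

/-- Membership in `ℳ_{p,r}` : member of `𝒮_{p,r}` all of whose sets are proper subsets of `[k]`. -/
def MprMem (k r : ℕ) [NeZero k] (p : ZMod k → ℕ) (S : Fin r → Finset (ZMod k)) : Prop :=
  SprMem k r p S ∧ ∀ i, S i ≠ Finset.univ

/-- `|ℳ_{p,r}|`. -/
noncomputable def Mcard (k r : ℕ) [NeZero k] (p : ZMod k → ℕ) : ℕ :=
  Nat.card {S : Fin r → Finset (ZMod k) // MprMem k r p S}

/-- `|𝒮_{p,r}|`. -/
noncomputable def Scard (k r : ℕ) [NeZero k] (p : ZMod k → ℕ) : ℕ :=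
  Nat.card {S : Fin r → Finset (ZMod k) // SprMem k r p S}

/-- `|ℳ_{q,r}|` for an integer-valued tuple `q` (empty if some entry of `q` is negative). -/
noncomputable def McardZ (k r : ℕ) [NeZero k] (q : ZMod k → ℤ) : ℕ :=
  Nat.card {S : Fin r → Finset (ZMod k) //
    (∀ j : ZMod k, (Nat.card {i : Fin r // j ∈ S i} : ℤ) = q j) ∧ ∀ i, S i ≠ Finset.univ}

/-- `alphaRel k S i j` holds iff `j = α(i,S)`. -/
def alphaRel (k : ℕ) [NeZero k] (S : Finset (ZMod k)) (i j : ZMod k) : Prop :=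
  if S = Finset.univ then j = i else j ∉ S ∧ cyc k i (j - 1) ⊆ S

/-- `betaRel k S i j` holds iff `j = β(i,S)`. -/
def betaRel (k : ℕ) [NeZero k] (S : Finset (ZMod k)) (i j : ZMod k) : Prop :=
  if S = Finset.univ then j = i else j + 1 ∉ S ∧ cyc k i j ⊆ S

/-- `gammaRel k S i j` holds iff `j = γ(i,S)`. -/
def gammaRel (k : ℕ) [NeZero k] (S : Finset (ZMod k)) (i j : ZMod k) : Prop :=
  if S = Finset.univ then j = i
  else if i ∈ S then j = i - 1
  else j + 1 ∉ S ∧ cyc k i j ⊆ S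

/-- The digraph on `[k]` with the `k-1` arcs `(i, ζ(i, S_{f i}))` for `i ∈ [k-1]`
(the nonzero elements of `ZMod k`) is a tree, i.e. a spanning tree oriented toward
the root `k` (represented by `0`): following the arcs from any vertex reaches the root. -/
def GIsTree (k r : ℕ) [NeZero k] (zeta : Finset (ZMod k) → ZMod k → ZMod k → Prop)
    (S : Fin r → Finset (ZMod k)) (f : {i : ZMod k // i ≠ 0} → Fin r) : Prop :=
  ∃ g : ZMod k → ZMod k, g 0 = 0 ∧
    (∀ i : {i : ZMod k // i ≠ 0}, zeta (S (f i)) i.1 (g i.1)) ∧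
    ∀ x : ZMod k, ∃ n : ℕ, g^[n] x = 0

/-- Sample space: pairs of a tuple `S ∈ ℳ_{p,r}` and a surjection `f : [k-1] → [r]`,
with the uniform probability measure. -/
abbrev OmM (k r : ℕ) [NeZero k] (p : ZMod k → ℕ) : Type :=
  {om : (Fin r → Finset (ZMod k)) × ({i : ZMod k // i ≠ 0} → Fin r) //
    MprMem k r p om.1 ∧ Function.Surjective om.2}

/-- Sample space `Ω`: pairs of a tuple `S ∈ 𝒮_{p,r}` and a surjection `f : [k-1] → [r]`,
with the uniform probability measure. -/
abbrev OmS (k r : ℕ) [NeZero k] (p : ZMod k → ℕ) : Type :=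
  {om : (Fin r → Finset (ZMod k)) × ({i : ZMod k // i ≠ 0} → Fin r) //
    SprMem k r p om.1 ∧ Function.Surjective om.2}

/-- Uniform probability of an event `A` in a (finite) sample space `Om`. -/
noncomputable def PrU {Om : Type} (A : Set Om) : ℚ :=
  (Nat.card A : ℚ) / (Nat.card Om : ℚ)

/-- The `Pr`-determinant of a `k × k` matrix of events (rows and columns indexed by
`[k]`, i.e. by `ZMod k`). -/
noncomputable def Pdet {k : ℕ} [NeZero k] {Om : Type} (E : ZMod k → ZMod k → Set Om) : ℚ :=
  ∑ pi : Equiv.Perm (ZMod k), ((Equiv.Perm.sign pi : ℤ) : ℚ) * PrU (⋂ i : ZMod k, E i (pi i))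

/-- The matrix of events `M_α`: `M_{α,i,j} = I^{f(i)}_{i,j}` for `i ∈ [k-1]`, and the
row of `i = k` (i.e. `0`) is constant equal to `Ω`. -/
def Malpha (k r : ℕ) [NeZero k] (p : ZMod k → ℕ) (i j : ZMod k) : Set (OmS k r p) :=
  {om : OmS k r p | ∀ hi : i ≠ 0, cyc k i j ⊆ om.1.1 (om.1.2 ⟨i, hi⟩)}

/-- The matrix of events `M_β`: `M_{β,i,j} = J^{f(i)}_{i,j+1}` for `i ∈ [k-1]`, and the
row of `i = k` (i.e. `0`) is constant equal to `Ω`. -/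
def Mbeta (k r : ℕ) [NeZero k] (p : ZMod k → ℕ) (i j : ZMod k) : Set (OmS k r p) :=
  {om : OmS k r p | ∀ hi : i ≠ 0,
    if i = j + 1 then om.1.1 (om.1.2 ⟨i, hi⟩) = Finset.univ
    else cyc k i (j + 1) ⊆ om.1.1 (om.1.2 ⟨i, hi⟩)}

/-- Membership of `om` in the event `J^{f(i)}_{a,b}`. -/
def Jmem (k r : ℕ) [NeZero k] (p : ZMod k → ℕ) (om : OmS k r p)
    (i : {i : ZMod k // i ≠ 0}) (a b : ZMod k) : Prop :=
  if a = b then om.1.1 (om.1.2 i) = Finset.univ else cyc k a b ⊆ om.1.1 (om.1.2 i)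

/-- The sets `K_{i,j}` of Section 5.1 (for given `a ∈ {2,…,k-1}` and `D ⊆ [a-2]`):
`K_{i,i} = ∅` for `i ∈ [a-2] ∖ D`, `K_{i,i} = [k]` for `i ∈ D ∪ {a-1}`, and
`K_{i,j} = ]i,j]` for `i ∈ {a-1,…,k-1}`, `j ∈ [k]`, `(i,j) ≠ (a-1,a-1)`.
(The element `m ∈ [k]` is represented by `(m : ZMod k)`, so `i = a-1` means
`i.val + 1 = a`.) -/
def Kset (k a : ℕ) [NeZero k] (D : Finset (ZMod k)) (i j : ZMod k) : Finset (ZMod k) :=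
  if i = j then (if i.val + 1 = a ∨ i ∈ D then Finset.univ else ∅) else cyc k i j

/-- `H_{f,π,j} = ∪ { K_{i,π(i)} : i ∈ [k-1] ∖ {j}, f(i) = f(j) }`. -/
def Hset (k a r : ℕ) [NeZero k] (D : Finset (ZMod k))
    (f : {i : ZMod k // i ≠ 0} → Fin r) (pi : Equiv.Perm (ZMod k))
    (j : {i : ZMod k // i ≠ 0}) : Finset (ZMod k) :=
  (Finset.univ.filter fun i : {i : ZMod k // i ≠ 0} => i ≠ j ∧ f i = f j).biUnion
    (fun i => Kset k a D i.1 (pi i.1))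

section AuxX
set_option linter.unusedSectionVars false
set_option maxHeartbeats 1000000

lemma mem_cyc {k : ℕ} [NeZero k] {i j x : ZMod k} :
    x ∈ cyc k i j ↔ 1 ≤ (x - i).val ∧ (x - i).val ≤ (j - i).val := by
  simp [cyc]

section facts
variable {k a : ℕ} [NeZero k] (hk : 3 ≤ k) (ha : 2 ≤ a) (hak : a ≤ k - 1)

include hk hak in
lemma Aval : ((a : ℕ) : ZMod k).val = a := ZMod.val_natCast_of_lt (by omega)

include hk ha hak in
lemma Amval : (((a : ℕ) : ZMod k) - 1).val = a - 1 := by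
  have h1 : ((a : ℕ) : ZMod k) - 1 = ((a - 1 : ℕ) : ZMod k) := by
    have := Nat.cast_sub (by omega : 1 ≤ a) (R := ZMod k)
    simp at this ⊢
    rw [this]
  rw [h1, ZMod.val_natCast_of_lt (by omega)]

include hk ha hak in
lemma AneAm : ((a : ℕ) : ZMod k) ≠ ((a : ℕ) : ZMod k) - 1 := by
  intro h
  have h2 := Amval hk ha hak
  rw [← h, Aval hk hak] at h2
  omega

include hk in
lemma eqA_iff {x : ZMod k} : x = ((a : ℕ) : ZMod k) ↔ (x - ((a : ℕ) : ZMod k)).val = 0 := by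
  rw [ZMod.val_eq_zero, sub_eq_zero]

include hk in
lemma eqAm_iff {x : ZMod k} :
    x = ((a : ℕ) : ZMod k) - 1 ↔ (x - ((a : ℕ) : ZMod k)).val = k - 1 := by
  have hneg : ((-1 : ZMod k)).val = k - 1 := by
    have h1 : (-1 : ZMod k) = ((k - 1 : ℕ) : ZMod k) := by
      have := Nat.cast_sub (by omega : 1 ≤ k) (R := ZMod k)
      simp [ZMod.natCast_self] at this ⊢
      rw [this]
    rw [h1, ZMod.val_natCast_of_lt (by omega)]
  constructor
  · rintro rfl
    rw [sub_sub_cancel_left] at *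
    exact hneg
  · intro h
    have : x - ((a : ℕ) : ZMod k) = -1 := ZMod.val_injective k (by rw [h, hneg])
    have := sub_eq_iff_eq_add.mp this
    rw [this]; ring

include hk in
lemma val_succ_shift {x : ZMod k} {y : ZMod k} (h : x = y + 1) :
    x.val = (y.val + 1) % k := by
  haveI : Fact (1 < k) := ⟨by omega⟩
  have : (1 : ZMod k).val = 1 := ZMod.val_one k
  rw [h, ZMod.val_add, this]
end facts

section Kfacts
variable {k a : ℕ} [NeZero k] (hk : 3 ≤ k) (ha : 2 ≤ a) (hak : a ≤ k - 1)
  {D : Finset (ZMod k)} (hD : ∀ i ∈ D, 1 ≤ i.val ∧ i.val ≤ a - 2)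

include hk ha hak hD in
lemma Knotmem (j : ZMod k) : ((a:ℕ) : ZMod k) ∉ Kset k a D ((a:ℕ):ZMod k) j := by
  unfold Kset
  split_ifs with h1 h2
  · exfalso
    rcases h2 with h2 | h2
    · rw [Aval hk hak] at h2; omega
    · have := hD _ h2; rw [Aval hk hak] at this; omega
  · exact notMem_empty _
  · rw [mem_cyc]; simp

include hk ha hak hD in
lemma Kins (j : ZMod k) :
    Kset k a D (((a:ℕ):ZMod k) - 1) j
      = insert ((a:ℕ):ZMod k) (Kset k a D ((a:ℕ):ZMod k) j) := by
  have hKAm : Kset k a D (((a:ℕ):ZMod k) - 1) j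
      = if ((a:ℕ):ZMod k) - 1 = j then Finset.univ else cyc k (((a:ℕ):ZMod k) - 1) j := by
    unfold Kset
    split_ifs with h1 h2
    · rfl
    · exfalso; apply h2; left; rw [Amval hk ha hak]; omega
    · rfl
  have hKA : Kset k a D ((a:ℕ):ZMod k) j
      = if ((a:ℕ):ZMod k) = j then (∅ : Finset (ZMod k)) else cyc k ((a:ℕ):ZMod k) j := by
    unfold Kset
    split_ifs with h1 h2
    · exfalso
      rcases h2 with h2 | h2
      · rw [Aval hk hak] at h2; omega
      · have := hD _ h2; rw [Aval hk hak] at this; omega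
    · rfl
    · rfl
  rw [hKAm, hKA]
  have hAmA : ((((a:ℕ):ZMod k) - 1) - ((a:ℕ):ZMod k)).val = k - 1 := (eqAm_iff hk).mp rfl
  have hAAm : (((a:ℕ):ZMod k) - (((a:ℕ):ZMod k) - 1)).val = 1 := by
    have h1 : ((a:ℕ):ZMod k) - (((a:ℕ):ZMod k) - 1) = 1 := by ring
    haveI : Fact (1 < k) := ⟨by omega⟩
    rw [h1, ZMod.val_one]
  by_cases hj1 : j = ((a:ℕ):ZMod k) - 1
  · subst hj1
    rw [if_pos rfl, if_neg (AneAm hk ha hak)]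
    ext x
    have hn : (x - ((a:ℕ):ZMod k)).val < k := ZMod.val_lt _
    have hx0 : x = ((a:ℕ):ZMod k) ↔ (x - ((a:ℕ):ZMod k)).val = 0 := eqA_iff hk
    simp only [mem_univ, mem_insert, mem_cyc, true_iff, hAmA, hx0]
    omega
  · by_cases hj2 : j = ((a:ℕ):ZMod k)
    · subst hj2
      rw [if_neg (fun h => hj1 h.symm), if_pos rfl]
      ext x
      have hn : (x - ((a:ℕ):ZMod k)).val < k := ZMod.val_lt _
      have hx : (x - (((a:ℕ):ZMod k) - 1)).val = ((x - ((a:ℕ):ZMod k)).val + 1) % k :=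
        val_succ_shift hk (by ring)
      have hx0 : x = ((a:ℕ):ZMod k) ↔ (x - ((a:ℕ):ZMod k)).val = 0 := eqA_iff hk
      simp only [mem_insert, notMem_empty, or_false, mem_cyc, hx, hAAm, hx0]
      have hsplit : ((x - ((a:ℕ):ZMod k)).val + 1) % k
          = if (x - ((a:ℕ):ZMod k)).val + 1 = k then 0 else (x - ((a:ℕ):ZMod k)).val + 1 := by
        split_ifs with h
        · simp [h]
        · exact Nat.mod_eq_of_lt (by omega)
      rw [hsplit]
      split_ifs with h <;> omega
    · rw [if_neg (fun h => hj1 h.symm), if_neg (fun h => hj2 h.symm)]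
      ext x
      have hn : (x - ((a:ℕ):ZMod k)).val < k := ZMod.val_lt _
      have hm : (j - ((a:ℕ):ZMod k)).val < k := ZMod.val_lt _
      have hm0 : (j - ((a:ℕ):ZMod k)).val ≠ 0 := fun h => hj2 ((eqA_iff hk).mpr h)
      have hmk : (j - ((a:ℕ):ZMod k)).val ≠ k - 1 := fun h => hj1 ((eqAm_iff hk).mpr h)
      have hx : (x - (((a:ℕ):ZMod k) - 1)).val = ((x - ((a:ℕ):ZMod k)).val + 1) % k :=
        val_succ_shift hk (by ring)
      have hjx : (j - (((a:ℕ):ZMod k) - 1)).val = ((j - ((a:ℕ):ZMod k)).val + 1) % k :=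
        val_succ_shift hk (by ring)
      have hjx' : (j - (((a:ℕ):ZMod k) - 1)).val = (j - ((a:ℕ):ZMod k)).val + 1 := by
        rw [hjx]; exact Nat.mod_eq_of_lt (by omega)
      have hx0 : x = ((a:ℕ):ZMod k) ↔ (x - ((a:ℕ):ZMod k)).val = 0 := eqA_iff hk
      simp only [mem_insert, mem_cyc, hx, hjx', hx0]
      have hsplit : ((x - ((a:ℕ):ZMod k)).val + 1) % k
          = if (x - ((a:ℕ):ZMod k)).val + 1 = k then 0 else (x - ((a:ℕ):ZMod k)).val + 1 := by
        split_ifs with h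
        · simp [h]
        · exact Nat.mod_eq_of_lt (by omega)
      rw [hsplit]
      split_ifs with h <;> omega

include hk ha hak hD in
lemma KmemA (j : ZMod k) : ((a:ℕ):ZMod k) ∈ Kset k a D (((a:ℕ):ZMod k) - 1) j := by
  rw [Kins hk ha hak hD]
  exact mem_insert_self _ _

end Kfacts


lemma notmem_Hset_iff {k a r : ℕ} [NeZero k] {D : Finset (ZMod k)}
    {f : {i : ZMod k // i ≠ 0} → Fin r} {pi : Equiv.Perm (ZMod k)}
    {j : {i : ZMod k // i ≠ 0}} {x : ZMod k} :
    x ∉ Hset k a r D f pi j ↔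
      ∀ i, i ≠ j → f i = f j → x ∉ Kset k a D i.1 (pi i.1) := by
  simp only [Hset, mem_biUnion, mem_filter, mem_univ, true_and, not_exists, not_and]
  tauto

/-- The `S`-component of the involution. -/
def swS {k r : ℕ} [NeZero k] (A : ZMod k) (i1 i2 : Fin r)
    (S : Fin r → Finset (ZMod k)) : Fin r → Finset (ZMod k) :=
  if A ∈ S i2 then S
  else fun i => if i = i1 then (S i1).erase A else if i = i2 then insert A (S i2) else S i

lemma swS_invol {k r : ℕ} [NeZero k] {A : ZMod k} {i1 i2 : Fin r} (hne : i1 ≠ i2)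
    {S : Fin r → Finset (ZMod k)} (h1 : A ∈ S i1) :
    swS A i2 i1 (swS A i1 i2 S) = S := by
  by_cases hcase : A ∈ S i2
  · have hinner : swS A i1 i2 S = S := if_pos hcase
    rw [hinner]
    exact if_pos h1
  · have happ : ∀ j, swS A i1 i2 S j
        = if j = i1 then (S i1).erase A else if j = i2 then insert A (S i2) else S j :=
      fun j => by rw [swS, if_neg hcase]
    have h1' : swS A i1 i2 S i1 = (S i1).erase A := by rw [happ, if_pos rfl]
    have h2' : swS A i1 i2 S i2 = insert A (S i2) := by
      rw [happ, if_neg hne.symm, if_pos rfl]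
    have hnm : A ∉ swS A i1 i2 S i1 := by rw [h1']; simp
    rw [swS, if_neg hnm]
    funext i
    by_cases h2 : i = i2
    · subst h2
      rw [if_pos rfl, h2', Finset.erase_insert hcase]
    · by_cases h3 : i = i1
      · subst h3
        rw [if_neg hne, if_pos rfl, h1', Finset.insert_erase h1]
      · rw [if_neg h2, if_neg h3, happ, if_neg h3, if_neg h2]

end AuxX

set_option maxHeartbeats 1000000 in
open scoped Classical in
/-- Lemma 10 (`X = 0`): the signed count of triples `(S,f,π)` in `Ω(N^{a,D})` with
`f(a-1) ≠ f(a)`, `a ∉ H_{f,π,a-1}` and `a ∉ H_{f,π,a}` is zero. Here `am` and `aa`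
denote the elements `a-1` and `a` of `[k-1]`. -/
theorem signed_sum_X (k r : ℕ) [NeZero k] (hk : 3 ≤ k) (hr : 0 < r) (hrk : r < k)
    (p : ZMod k → ℕ) (a : ℕ) (ha : 2 ≤ a) (hak : a ≤ k - 1)
    (D : Finset (ZMod k)) (hD : ∀ i ∈ D, 1 ≤ i.val ∧ i.val ≤ a - 2)
    (am aa : {i : ZMod k // i ≠ 0}) (ham : am.1 = (a : ZMod k) - 1)
    (haa : aa.1 = (a : ZMod k)) :
    ∑ x ∈ Finset.univ.filter (fun x : (Fin r → Finset (ZMod k)) ×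
          ({i : ZMod k // i ≠ 0} → Fin r) × Equiv.Perm (ZMod k) =>
        SprMem k r p x.1 ∧ Function.Surjective x.2.1 ∧
        (∀ i : ZMod k, 1 ≤ i.val → i.val ≤ a - 2 → x.2.2 i = i) ∧
        (∀ i : {i : ZMod k // i ≠ 0}, Kset k a D i.1 (x.2.2 i.1) ⊆ x.1 (x.2.1 i)) ∧
        x.2.1 am ≠ x.2.1 aa ∧
        (a : ZMod k) ∉ Hset k a r D x.2.1 x.2.2 am ∧
        (a : ZMod k) ∉ Hset k a r D x.2.1 x.2.2 aa),
      (Equiv.Perm.sign x.2.2 : ℤ) = 0 := by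

  have hamne : am.1 ≠ aa.1 := by
    rw [ham, haa]; exact (AneAm hk ha hak).symm
  have hamaane : am ≠ aa := fun h => hamne (congrArg Subtype.val h)
  refine Finset.sum_involution
    (fun x _ => (swS ((a:ℕ):ZMod k) (x.2.1 am) (x.2.1 aa) x.1,
      (x.2.1 ∘ (Equiv.swap am aa), x.2.2 * Equiv.swap am.1 aa.1)))
    ?_ ?_ ?_ ?_
  · -- signs cancel
    intro x hx
    simp only [Equiv.Perm.sign_mul, Equiv.Perm.sign_swap hamne]
    push_cast
    ring
  · -- g x ≠ x
    intro x hx _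
    intro h
    have h2 : x.2.2 * Equiv.swap am.1 aa.1 = x.2.2 := congrArg (fun y => y.2.2) h
    have h3 : Equiv.swap am.1 aa.1 = 1 :=
      mul_left_cancel (a := x.2.2) (by rw [mul_one]; exact h2)
    have h4 := congrArg (fun e => e am.1) h3
    simp [Equiv.swap_apply_left] at h4
    exact hamne h4.symm
  · -- g maps s to s
    intro x hx
    rw [Finset.mem_filter] at hx ⊢
    obtain ⟨-, hS, hf, hpifix, hK, hff, hH1, hH2⟩ := hx
    dsimp only
    have hAinT1 : ((a:ℕ):ZMod k) ∈ x.1 (x.2.1 am) := by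
      refine hK am ?_
      have hmem : ((a:ℕ):ZMod k) ∈ Kset k a D am.1 (x.2.2 am.1) := by
        rw [ham]; exact KmemA hk ha hak hD _
      exact hmem
    refine ⟨Finset.mem_univ _, ?_, ?_, ?_, ?_, ?_, ?_, ?_⟩
    · -- SprMem
      by_cases hcase : ((a:ℕ):ZMod k) ∈ x.1 (x.2.1 aa)
      · simpa only [swS, if_pos hcase] using hS
      · intro j
        rw [← hS j]
        apply Nat.card_congr
        by_cases hj : j = ((a:ℕ):ZMod k)
        · subst hj
          refine Equiv.subtypeEquiv (Equiv.swap (x.2.1 am) (x.2.1 aa)) fun i => ?_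
          simp only [swS, if_neg hcase]
          by_cases h1 : i = x.2.1 am
          · subst h1
            rw [if_pos rfl, Equiv.swap_apply_left]
            simp [hcase]
          · by_cases h2 : i = x.2.1 aa
            · subst h2
              rw [if_neg h1, if_pos rfl, Equiv.swap_apply_right]
              simp [hAinT1]
            · rw [if_neg h1, if_neg h2, Equiv.swap_apply_of_ne_of_ne h1 h2]
        · refine Equiv.subtypeEquiv (Equiv.refl _) fun i => ?_
          simp only [Equiv.refl_apply, swS, if_neg hcase]
          by_cases h1 : i = x.2.1 am
          · subst h1; rw [if_pos rfl]; simp [Finset.mem_erase, hj]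
          · by_cases h2 : i = x.2.1 aa
            · subst h2; rw [if_neg h1, if_pos rfl]; simp [Finset.mem_insert, hj]
            · rw [if_neg h1, if_neg h2]
    · -- surjectivity
      exact hf.comp (Equiv.swap am aa).surjective
    · -- fixes small points
      intro i h1 h2
      have hi1 : i ≠ am.1 := by
        intro h; rw [h, ham, Amval hk ha hak] at h2; omega
      have hi2 : i ≠ aa.1 := by
        intro h; rw [h, haa, Aval hk hak] at h2; omega
      rw [Equiv.Perm.mul_apply, Equiv.swap_apply_of_ne_of_ne hi1 hi2]
      exact hpifix i h1 h2
    · -- K-containment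
      intro i
      by_cases hi1 : i = am
      · rw [hi1]
        have hpi : (x.2.2 * Equiv.swap am.1 aa.1) am.1 = x.2.2 aa.1 := by
          rw [Equiv.Perm.mul_apply, Equiv.swap_apply_left]
        have hfa : (x.2.1 ∘ ⇑(Equiv.swap am aa)) am = x.2.1 aa := by
          simp [Function.comp, Equiv.swap_apply_left]
        rw [hpi, hfa, ham, Kins hk ha hak hD]
        have hsub : Kset k a D ((a:ℕ):ZMod k) (x.2.2 aa.1) ⊆ x.1 (x.2.1 aa) := by
          have h5 := hK aa
          nth_rewrite 1 [haa] at h5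
          exact h5
        by_cases hcase : ((a:ℕ):ZMod k) ∈ x.1 (x.2.1 aa)
        · simp only [swS, if_pos hcase]
          exact Finset.insert_subset hcase hsub
        · simp only [swS, if_neg hcase]
          rw [if_neg (fun h => hff h.symm)]
          simp only [if_true, eq_self_iff_true]
          exact Finset.insert_subset_insert _ hsub
      · by_cases hi2 : i = aa
        · rw [hi2]
          have hpi : (x.2.2 * Equiv.swap am.1 aa.1) aa.1 = x.2.2 am.1 := by
            rw [Equiv.Perm.mul_apply, Equiv.swap_apply_right]
          have hfa : (x.2.1 ∘ ⇑(Equiv.swap am aa)) aa = x.2.1 am := by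
            simp [Function.comp, Equiv.swap_apply_right]
          rw [hpi, hfa, haa]
          have hsub : Kset k a D ((a:ℕ):ZMod k) (x.2.2 am.1) ⊆ x.1 (x.2.1 am) := by
            have h5 := hK am
            nth_rewrite 1 [ham] at h5
            rw [Kins hk ha hak hD] at h5
            exact (Finset.subset_insert _ _).trans h5
          have hnot : ((a:ℕ):ZMod k) ∉ Kset k a D ((a:ℕ):ZMod k) (x.2.2 am.1) :=
            Knotmem hk ha hak hD _
          by_cases hcase : ((a:ℕ):ZMod k) ∈ x.1 (x.2.1 aa)
          · simp only [swS, if_pos hcase]; exact hsub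
          · simp only [swS, if_neg hcase]
            simp only [if_true, eq_self_iff_true]
            exact Finset.subset_erase.mpr ⟨hsub, hnot⟩
        · have hi1' : i.1 ≠ am.1 := fun h => hi1 (Subtype.ext h)
          have hi2' : i.1 ≠ aa.1 := fun h => hi2 (Subtype.ext h)
          have hpi : (x.2.2 * Equiv.swap am.1 aa.1) i.1 = x.2.2 i.1 := by
            rw [Equiv.Perm.mul_apply, Equiv.swap_apply_of_ne_of_ne hi1' hi2']
          have hfa : (x.2.1 ∘ ⇑(Equiv.swap am aa)) i = x.2.1 i := by
            simp [Function.comp, Equiv.swap_apply_of_ne_of_ne hi1 hi2]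
          rw [hpi, hfa]
          by_cases hcase : ((a:ℕ):ZMod k) ∈ x.1 (x.2.1 aa)
          · simp only [swS, if_pos hcase]; exact hK i
          · simp only [swS, if_neg hcase]
            by_cases hfi1 : x.2.1 i = x.2.1 am
            · rw [if_pos hfi1]
              refine Finset.subset_erase.mpr ⟨by rw [← hfi1]; exact hK i, ?_⟩
              exact (notmem_Hset_iff.mp hH1) i hi1 hfi1
            · rw [if_neg hfi1]
              by_cases hfi2 : x.2.1 i = x.2.1 aa
              · rw [if_pos hfi2]
                refine Finset.Subset.trans ?_ (Finset.subset_insert _ _)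
                rw [← hfi2]; exact hK i
              · rw [if_neg hfi2]; exact hK i
    · -- f'(am) ≠ f'(aa)
      have h5a : (x.2.1 ∘ ⇑(Equiv.swap am aa)) am = x.2.1 aa := by
        simp [Function.comp, Equiv.swap_apply_left]
      have h5b : (x.2.1 ∘ ⇑(Equiv.swap am aa)) aa = x.2.1 am := by
        simp [Function.comp, Equiv.swap_apply_right]
      rw [h5a, h5b]
      exact hff.symm
    · -- a not in Hset at am
      rw [notmem_Hset_iff]
      intro i hi hfi
      by_cases hi2 : i = aa
      · exfalso
        rw [hi2] at hfi
        simp only [Function.comp, Equiv.swap_apply_left, Equiv.swap_apply_right] at hfi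
        exact hff hfi
      · have hi1' : i.1 ≠ am.1 := fun h => hi (Subtype.ext h)
        have hi2' : i.1 ≠ aa.1 := fun h => hi2 (Subtype.ext h)
        have hpi : (x.2.2 * Equiv.swap am.1 aa.1) i.1 = x.2.2 i.1 := by
          rw [Equiv.Perm.mul_apply, Equiv.swap_apply_of_ne_of_ne hi1' hi2']
        rw [hpi]
        refine (notmem_Hset_iff.mp hH2) i hi2 ?_
        simpa only [Function.comp, Equiv.swap_apply_of_ne_of_ne hi hi2,
          Equiv.swap_apply_left] using hfi
    · -- a not in Hset at aa
      rw [notmem_Hset_iff]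
      intro i hi hfi
      by_cases hi1 : i = am
      · exfalso
        rw [hi1] at hfi
        simp only [Function.comp, Equiv.swap_apply_left, Equiv.swap_apply_right] at hfi
        exact hff hfi.symm
      · have hi1' : i.1 ≠ am.1 := fun h => hi1 (Subtype.ext h)
        have hi2' : i.1 ≠ aa.1 := fun h => hi (Subtype.ext h)
        have hpi : (x.2.2 * Equiv.swap am.1 aa.1) i.1 = x.2.2 i.1 := by
          rw [Equiv.Perm.mul_apply, Equiv.swap_apply_of_ne_of_ne hi1' hi2']
        rw [hpi]
        refine (notmem_Hset_iff.mp hH1) i hi1 ?_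
        simpa only [Function.comp, Equiv.swap_apply_of_ne_of_ne hi1 hi,
          Equiv.swap_apply_right] using hfi
  · -- involution
    intro x hx
    rw [Finset.mem_filter] at hx
    obtain ⟨-, hS, hf, hpifix, hK, hff, hH1, hH2⟩ := hx
    have hAinT1 : ((a:ℕ):ZMod k) ∈ x.1 (x.2.1 am) := by
      refine hK am ?_
      have hmem : ((a:ℕ):ZMod k) ∈ Kset k a D am.1 (x.2.2 am.1) := by
        rw [ham]; exact KmemA hk ha hak hD _
      exact hmem
    have hgf1 : (x.2.1 ∘ ⇑(Equiv.swap am aa)) am = x.2.1 aa := by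
      simp [Function.comp, Equiv.swap_apply_left]
    have hgf2 : (x.2.1 ∘ ⇑(Equiv.swap am aa)) aa = x.2.1 am := by
      simp [Function.comp, Equiv.swap_apply_right]
    dsimp only
    refine Prod.ext ?_ (Prod.ext ?_ ?_)
    · show swS _ _ _ _ = x.1
      rw [hgf1, hgf2]
      exact swS_invol hff hAinT1
    · show (x.2.1 ∘ ⇑(Equiv.swap am aa)) ∘ ⇑(Equiv.swap am aa) = x.2.1
      funext i
      simp [Function.comp, Equiv.swap_apply_self]
    · show x.2.2 * Equiv.swap am.1 aa.1 * Equiv.swap am.1 aa.1 = x.2.2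
      rw [mul_assoc, Equiv.swap_mul_self, mul_one]
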